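/- For subsets I, J of [k] = {1,…,k}, there exists a digraph homomorphism from the oriented path Q_I to the oriented path Q_J if and only if I ⊆ J. Here Q_I is the oriented path formed by concatenating a single forward edge, then for each l=1,…,k a single forward edge if l∈I and a zigzag •→•←•→• if l∉I, then a final single forward edge. -/

import Mathlib

/-- Vertices of the oriented path Q_I: junction vertices j_0, …, j_{k+2}
    (`Sum.inl`), plus two internal zigzag vertices for each l ∉ I (`Sum.inr`). -/
def QV7 (k : ℕ) (I : Finset (Fin k)) : Type :=
  Fin (k + 3) ⊕ ({l : Fin k // l ∉ I} × Fin 2)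

/-- Edges of Q_I: an initial edge j_0→j_1, a final edge j_{k+1}→j_{k+2},
    a single edge j_{l+1}→j_{l+2} for each l ∈ I, and a zigzag
    j_{l+1}→z(l,0)←z(l,1)→j_{l+2} for each l ∉ I. -/
def QE7 (k : ℕ) (I : Finset (Fin k)) : QV7 k I → QV7 k I → Prop := fun x y =>
  (x = Sum.inl ⟨0, by omega⟩ ∧ y = Sum.inl ⟨1, by omega⟩) ∨
  (x = Sum.inl ⟨k + 1, by omega⟩ ∧ y = Sum.inl ⟨k + 2, by omega⟩) ∨
  (∃ l : Fin k, l ∈ I ∧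
    x = Sum.inl ⟨l.1 + 1, by have := l.isLt; omega⟩ ∧
    y = Sum.inl ⟨l.1 + 2, by have := l.isLt; omega⟩) ∨
  (∃ z : {l : Fin k // l ∉ I},
    (x = Sum.inl ⟨z.1.1 + 1, by have := z.1.isLt; omega⟩ ∧ y = Sum.inr (z, 0)) ∨
    (x = Sum.inr (z, 1) ∧ y = Sum.inr (z, 0)) ∨
    (x = Sum.inr (z, 1) ∧ y = Sum.inl ⟨z.1.1 + 2, by have := z.1.isLt; omega⟩))

namespace Stmt7Aux

/-- Level function. -/
def lvl {k : ℕ} {J : Finset (Fin k)} : QV7 k J → ℕ :=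
  Sum.elim (fun i => i.1) (fun p => p.1.1.1 + 2 - p.2.1)

lemma edge_lvl {k : ℕ} {J : Finset (Fin k)} {x y : QV7 k J} (h : QE7 k J x y) :
    lvl y = lvl x + 1 := by
  rcases h with ⟨hx, hy⟩ | ⟨hx, hy⟩ | ⟨l, _, hx, hy⟩ | ⟨z, ⟨hx, hy⟩ | ⟨hx, hy⟩ | ⟨hx, hy⟩⟩ <;>
    subst hx <;> subst hy <;> simp [lvl]

lemma no_out_z0 {k : ℕ} {J : Finset (Fin k)} {z : {l : Fin k // l ∉ J}} {y : QV7 k J}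
    (h : QE7 k J (Sum.inr (z, 0)) y) : False := by
  rcases h with ⟨hx, _⟩ | ⟨hx, _⟩ | ⟨l, _, hx, _⟩ | ⟨w, ⟨hx, _⟩ | ⟨hx, _⟩ | ⟨hx, _⟩⟩ <;>
    first
      | simp at hx
      | (injection hx with h1; injection h1 with h1 h2; exact absurd h2 (by decide))

lemma no_in_z1 {k : ℕ} {J : Finset (Fin k)} {z : {l : Fin k // l ∉ J}} {x : QV7 k J}
    (h : QE7 k J x (Sum.inr (z, 1))) : False := by
  rcases h with ⟨_, hy⟩ | ⟨_, hy⟩ | ⟨l, _, _, hy⟩ | ⟨w, ⟨_, hy⟩ | ⟨_, hy⟩ | ⟨_, hy⟩⟩ <;>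
    first
      | simp at hy
      | (injection hy with h1; injection h1 with h1 h2; exact absurd h2 (by decide))

/-- Every junction j_i with 1 ≤ i has an incoming edge. -/
lemma exists_in_edge {k : ℕ} (I : Finset (Fin k)) (i : ℕ) (h1 : 1 ≤ i) (h2 : i ≤ k + 2) :
    ∃ x, QE7 k I x (Sum.inl ⟨i, by omega⟩) := by
  rcases eq_or_lt_of_le h1 with h | h
  · exact ⟨Sum.inl ⟨0, by omega⟩,
      Or.inl ⟨rfl, congrArg Sum.inl (Fin.ext (show i = 1 by omega))⟩⟩
  rcases eq_or_lt_of_le h2 with h' | h'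
  · exact ⟨Sum.inl ⟨k + 1, by omega⟩,
      Or.inr (Or.inl ⟨rfl, congrArg Sum.inl (Fin.ext (show i = k + 2 by omega))⟩)⟩
  -- 2 ≤ i ≤ k + 1
  by_cases hI : (⟨i - 2, by omega⟩ : Fin k) ∈ I
  · exact ⟨Sum.inl ⟨i - 1, by omega⟩,
      Or.inr (Or.inr (Or.inl ⟨⟨i - 2, by omega⟩, hI,
        congrArg Sum.inl (Fin.ext (show i - 1 = i - 2 + 1 by omega)),
        congrArg Sum.inl (Fin.ext (show i = i - 2 + 2 by omega))⟩))⟩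
  · exact ⟨Sum.inr (⟨⟨i - 2, by omega⟩, hI⟩, 1),
      Or.inr (Or.inr (Or.inr ⟨⟨⟨i - 2, by omega⟩, hI⟩, Or.inr (Or.inr ⟨rfl,
        congrArg Sum.inl (Fin.ext (show i = i - 2 + 2 by omega))⟩)⟩))⟩

/-- Every junction j_i with i ≤ k+1 has an outgoing edge. -/
lemma exists_out_edge {k : ℕ} (I : Finset (Fin k)) (i : ℕ) (h2 : i ≤ k + 1) :
    ∃ y, QE7 k I (Sum.inl ⟨i, by omega⟩) y := by
  rcases Nat.eq_zero_or_pos i with h | h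
  · exact ⟨Sum.inl ⟨1, by omega⟩,
      Or.inl ⟨congrArg Sum.inl (Fin.ext (show i = 0 by omega)), rfl⟩⟩
  rcases eq_or_lt_of_le h2 with h' | h'
  · exact ⟨Sum.inl ⟨k + 2, by omega⟩,
      Or.inr (Or.inl ⟨congrArg Sum.inl (Fin.ext (show i = k + 1 by omega)), rfl⟩)⟩
  -- 1 ≤ i ≤ k
  by_cases hI : (⟨i - 1, by omega⟩ : Fin k) ∈ I
  · exact ⟨Sum.inl ⟨i + 1, by omega⟩,
      Or.inr (Or.inr (Or.inl ⟨⟨i - 1, by omega⟩, hI,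
        congrArg Sum.inl (Fin.ext (show i = i - 1 + 1 by omega)),
        congrArg Sum.inl (Fin.ext (show i + 1 = i - 1 + 2 by omega))⟩))⟩
  · exact ⟨Sum.inr (⟨⟨i - 1, by omega⟩, hI⟩, 0),
      Or.inr (Or.inr (Or.inr ⟨⟨⟨i - 1, by omega⟩, hI⟩, Or.inl
        ⟨congrArg Sum.inl (Fin.ext (show i = i - 1 + 1 by omega)), rfl⟩⟩))⟩

lemma lvl_phi {k : ℕ} {I J : Finset (Fin k)} (φ : QV7 k I → QV7 k J)
    (hφ : ∀ x y, QE7 k I x y → QE7 k J (φ x) (φ y))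
    (h0 : φ (Sum.inl 0) = Sum.inl 0) :
    ∀ i : ℕ, (h : i ≤ k + 1) → lvl (φ (Sum.inl ⟨i, by omega⟩)) = i := by
  intro i
  induction i with
  | zero =>
    intro _
    have e : (⟨0, by omega⟩ : Fin (k + 3)) = 0 := by ext; simp
    rw [e, h0]; rfl
  | succ n ih =>
    intro h
    have hn := ih (by omega)
    rcases Nat.eq_zero_or_pos n with h0' | h0'
    · subst h0'
      have he : QE7 k I (Sum.inl ⟨0, by omega⟩) (Sum.inl ⟨1, by omega⟩) :=
        Or.inl ⟨rfl, rfl⟩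
      have := edge_lvl (hφ _ _ he)
      show lvl (φ (Sum.inl ⟨1, by omega⟩)) = 1
      omega
    · -- segment l = n - 1 joins j_n and j_{n+1}
      have e1 : (Sum.inl ⟨n, by omega⟩ : QV7 k I)
          = Sum.inl ⟨(⟨n - 1, by omega⟩ : Fin k).1 + 1, by omega⟩ :=
        congrArg Sum.inl (Fin.ext (show n = n - 1 + 1 by omega))
      have e2 : (Sum.inl ⟨n + 1, by omega⟩ : QV7 k I)
          = Sum.inl ⟨(⟨n - 1, by omega⟩ : Fin k).1 + 2, by omega⟩ :=
        congrArg Sum.inl (Fin.ext (show n + 1 = n - 1 + 2 by omega))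
      rw [e2]
      rw [e1] at hn
      by_cases hI : (⟨n - 1, by omega⟩ : Fin k) ∈ I
      · have he : QE7 k I (Sum.inl ⟨(⟨n - 1, by omega⟩ : Fin k).1 + 1, by omega⟩)
            (Sum.inl ⟨(⟨n - 1, by omega⟩ : Fin k).1 + 2, by omega⟩) :=
          Or.inr (Or.inr (Or.inl ⟨⟨n - 1, by omega⟩, hI, rfl, rfl⟩))
        have t1 := edge_lvl (hφ _ _ he)
        omega
      · have he1 : QE7 k I (Sum.inl ⟨(⟨n - 1, by omega⟩ : Fin k).1 + 1, by omega⟩)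
            (Sum.inr (⟨⟨n - 1, by omega⟩, hI⟩, 0)) :=
          Or.inr (Or.inr (Or.inr ⟨⟨⟨n - 1, by omega⟩, hI⟩, Or.inl ⟨rfl, rfl⟩⟩))
        have he2 : QE7 k I (Sum.inr (⟨⟨n - 1, by omega⟩, hI⟩, 1))
            (Sum.inr (⟨⟨n - 1, by omega⟩, hI⟩, 0)) :=
          Or.inr (Or.inr (Or.inr ⟨⟨⟨n - 1, by omega⟩, hI⟩, Or.inr (Or.inl ⟨rfl, rfl⟩)⟩))
        have he3 : QE7 k I (Sum.inr (⟨⟨n - 1, by omega⟩, hI⟩, 1))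
            (Sum.inl ⟨(⟨n - 1, by omega⟩ : Fin k).1 + 2, by omega⟩) :=
          Or.inr (Or.inr (Or.inr ⟨⟨⟨n - 1, by omega⟩, hI⟩, Or.inr (Or.inr ⟨rfl, rfl⟩)⟩))
        have t1 := edge_lvl (hφ _ _ he1)
        have t2 := edge_lvl (hφ _ _ he2)
        have t3 := edge_lvl (hφ _ _ he3)
        omega

/-- The homomorphism for the converse direction. -/
def F (k : ℕ) (I J : Finset (Fin k)) : QV7 k I → QV7 k J :=
  Sum.elim (fun i => Sum.inl i) (fun p =>
    if hJ : p.1.1 ∈ J then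
      (if p.2 = 0 then Sum.inl ⟨p.1.1.1 + 2, by have := p.1.1.isLt; omega⟩
       else Sum.inl ⟨p.1.1.1 + 1, by have := p.1.1.isLt; omega⟩)
    else Sum.inr (⟨p.1.1, hJ⟩, p.2))

lemma F_hom {k : ℕ} {I J : Finset (Fin k)} (hIJ : I ⊆ J) :
    ∀ x y, QE7 k I x y → QE7 k J (F k I J x) (F k I J y) := by
  intro x y h
  rcases h with ⟨hx, hy⟩ | ⟨hx, hy⟩ | ⟨l, hl, hx, hy⟩ | ⟨z, ⟨hx, hy⟩ | ⟨hx, hy⟩ | ⟨hx, hy⟩⟩ <;>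
      subst hx <;> subst hy
  · exact Or.inl ⟨rfl, rfl⟩
  · exact Or.inr (Or.inl ⟨rfl, rfl⟩)
  · exact Or.inr (Or.inr (Or.inl ⟨l, hIJ hl, rfl, rfl⟩))
  · by_cases hJ : z.1 ∈ J
    · refine Or.inr (Or.inr (Or.inl ⟨z.1, hJ, rfl, ?_⟩))
      simp [F, hJ, Sum.elim] <;> rfl
    · refine Or.inr (Or.inr (Or.inr ⟨⟨z.1, hJ⟩, Or.inl ⟨rfl, ?_⟩⟩))
      simp [F, hJ, Sum.elim] <;> rfl
  · by_cases hJ : z.1 ∈ J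
    · refine Or.inr (Or.inr (Or.inl ⟨z.1, hJ, ?_, ?_⟩)) <;> simp [F, hJ, Sum.elim] <;> rfl
    · refine Or.inr (Or.inr (Or.inr ⟨⟨z.1, hJ⟩, Or.inr (Or.inl ⟨?_, ?_⟩)⟩)) <;> simp [F, hJ, Sum.elim] <;> rfl
  · by_cases hJ : z.1 ∈ J
    · refine Or.inr (Or.inr (Or.inl ⟨z.1, hJ, ?_, rfl⟩))
      simp [F, hJ, Sum.elim] <;> rfl
    · refine Or.inr (Or.inr (Or.inr ⟨⟨z.1, hJ⟩, Or.inr (Or.inr ⟨?_, rfl⟩)⟩))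
      simp [F, hJ, Sum.elim] <;> rfl

end Stmt7Aux

open Stmt7Aux in
/-- There is a homomorphism Q_I → Q_J sending initial vertex to initial vertex
    and terminal vertex to terminal vertex if and only if I ⊆ J. -/
theorem stmt7 (k : ℕ) (I J : Finset (Fin k)) :
    (∃ φ : QV7 k I → QV7 k J,
      (∀ x y, QE7 k I x y → QE7 k J (φ x) (φ y)) ∧
      φ (Sum.inl 0) = Sum.inl 0 ∧
      φ (Sum.inl (Fin.last (k + 2))) = Sum.inl (Fin.last (k + 2))) ↔ I ⊆ J := by
  constructor
  · rintro ⟨φ, hφ, h0, -⟩ l hlI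
    have hlk := l.isLt
    -- level of φ(j_{l+1})
    have hA : lvl (φ (Sum.inl ⟨l.1 + 1, by omega⟩)) = l.1 + 1 :=
      lvl_phi φ hφ h0 (l.1 + 1) (by omega)
    -- the single edge j_{l+1} → j_{l+2}
    have hedge : QE7 k J (φ (Sum.inl ⟨l.1 + 1, by omega⟩)) (φ (Sum.inl ⟨l.1 + 2, by omega⟩)) :=
      hφ _ _ (Or.inr (Or.inr (Or.inl ⟨l, hlI, rfl, rfl⟩)))
    obtain ⟨w, hw⟩ := exists_in_edge I (l.1 + 1) (by omega) (by omega)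
    have hw' := hφ _ _ hw
    obtain ⟨u, hu⟩ := exists_out_edge I (l.1 + 2) (by omega)
    have hu' := hφ _ _ hu
    rcases hedge with ⟨hx, hy⟩ | ⟨hx, hy⟩ | ⟨l', hl', hx, hy⟩ |
        ⟨z, ⟨hx, hy⟩ | ⟨hx, hy⟩ | ⟨hx, hy⟩⟩
    · rw [hx] at hA; simp [lvl] at hA
    · rw [hx] at hA; simp [lvl] at hA; omega
    · rw [hx] at hA
      simp [lvl] at hA
      have : l' = l := Fin.ext (by omega)
      rwa [this] at hl'
    · rw [hy] at hu'
      exact absurd hu' no_out_z0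
    · rw [hx] at hw'
      exact absurd hw' (fun h => no_in_z1 h)
    · rw [hx] at hw'
      exact absurd hw' (fun h => no_in_z1 h)
  · intro hIJ
    refine ⟨F k I J, F_hom hIJ, rfl, rfl⟩
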